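/- Let f ∈ F_{μ,L}(ℝ^d) with L > 0, μ ≤ 0, κ = μ/L, bounded below by f_*. Run N gradient steps x_{i+1} = x_i - (h_i/L)∇f(x_i) with all h_i ∈ (0, h̄(κ)]. Define p(h,κ) = 2h - h²(-κ)/(1-κ) for h ∈ (0,1] and p(h,κ) = h(2-h)(2-κh)/(2-(1+κ)h) for h ∈ [1, h̄(κ)]. Then min_{0 ≤ i ≤ N} ‖∇f(x_i)‖² ≤ 2L(f(x₀) - f_*) / (1 + ∑_{i=0}^{N-1} p(h_i, κ)). -/

import Mathlib

noncomputable def hbar (κ : ℝ) : ℝ := 3 / (1 + κ + Real.sqrt (1 - κ + κ ^ 2))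

noncomputable def pcoef (h κ : ℝ) : ℝ :=
  if h ≤ 1 then 2 * h - h ^ 2 * (-κ) / (1 - κ)
  else h * (2 - h) * (2 - κ * h) / (2 - (1 + κ) * h)


private lemma aux_T {κ h : ℝ} (hκ : κ ≤ 0) (h0 : 0 < h) (hhb : h ≤ hbar κ) :
    0 ≤ κ * h ^ 2 - 2 * (1 + κ) * h + 3 := by
  set r := Real.sqrt (1 - κ + κ ^ 2) with hr
  have hr0 : 0 ≤ r := Real.sqrt_nonneg _
  have hr2 : r ^ 2 = 1 - κ + κ ^ 2 := Real.sq_sqrt (by nlinarith)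
  have hden : 0 < 1 + κ + r := by
    by_contra hc
    push_neg at hc
    have h1 : r ≤ -(1 + κ) := by linarith
    have := mul_self_le_mul_self hr0 h1
    nlinarith
  have hhb' : h * (1 + κ + r) ≤ 3 := by
    rw [hbar, ← hr] at hhb
    calc h * (1 + κ + r) ≤ (3 / (1 + κ + r)) * (1 + κ + r) :=
          mul_le_mul_of_nonneg_right hhb hden.le
      _ = 3 := by field_simp
  have ht1 : 0 ≤ 3 - h * (1 + κ + r) := by linarith
  have ht2 : 0 ≤ r - (1 + κ - κ * h) := by
    nlinarith [mul_nonneg (neg_nonneg.2 hκ) ht1, hden, hr2]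
  nlinarith [mul_nonneg h0.le ht2, ht1]

private lemma aux_q {κ h : ℝ} (hκ : κ ≤ 0) (h0 : 0 < h)
    (hT : 0 ≤ κ * h ^ 2 - 2 * (1 + κ) * h + 3) : 0 < 2 - (1 + κ) * h := by
  nlinarith [mul_nonneg (neg_nonneg.2 hκ) (sq_nonneg h)]

private lemma aux_h2 {κ h : ℝ} (hκ : κ ≤ 0) (h0 : 0 < h)
    (hT : 0 ≤ κ * h ^ 2 - 2 * (1 + κ) * h + 3) : h ≤ 2 := by
  by_contra hc
  push_neg at hc
  nlinarith [mul_nonneg (neg_nonneg.2 hκ) (mul_nonneg h0.le (by linarith : (0:ℝ) ≤ h - 2))]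

private lemma pcoef_nonneg {κ h : ℝ} (hκ : κ ≤ 0) (h0 : 0 < h)
    (hT : 0 ≤ κ * h ^ 2 - 2 * (1 + κ) * h + 3) : 0 ≤ pcoef h κ := by
  have hκ1 : (0:ℝ) < 1 - κ := by linarith
  rcases le_or_gt h 1 with hle | hgt
  · rw [pcoef, if_pos hle, sub_nonneg, div_le_iff₀ hκ1]
    nlinarith [mul_nonneg (neg_nonneg.2 hκ) (by linarith : (0:ℝ) ≤ 1 - h)]
  · rw [pcoef, if_neg (not_le.2 hgt)]
    have h2 : h ≤ 2 := aux_h2 hκ h0 hT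
    apply div_nonneg _ (aux_q hκ h0 hT).le
    have h3 : (0:ℝ) ≤ 2 - κ * h := by nlinarith
    exact mul_nonneg (mul_nonneg h0.le (by linarith)) h3

private lemma step_scalar {κ h a b s D : ℝ} (hκ : κ ≤ 0) (h0 : 0 < h)
    (hT : 0 ≤ κ * h ^ 2 - 2 * (1 + κ) * h + 3)
    (ha : 0 ≤ a) (hb : 0 ≤ b) (hcs : 2 * s ≤ a + b)
    (hlow : 2 * h * (1 - κ) * s + κ * h ^ 2 * (1 - κ) * a
        + (b - 2 * (1 - κ * h) * s + (1 - κ * h) ^ 2 * a) ≤ (1 - κ) * D)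
    (hupp : (1 - κ) * D ≤ 2 * h * (1 - κ) * a - κ * h ^ 2 * (1 - κ) * a
        - (b - 2 * (1 - κ * h) * s + (1 - κ * h) ^ 2 * a)) :
    pcoef h κ * min a b ≤ D := by
  have hκ1 : (0:ℝ) < 1 - κ := by linarith
  rcases le_or_gt h 1 with hle | hgt
  · have hp : pcoef h κ = (2 * h * (1 - κ) + κ * h ^ 2) / (1 - κ) := by
      rw [pcoef, if_pos hle]; field_simp; ring
    rw [hp, div_mul_eq_mul_div, div_le_iff₀ hκ1]
    rcases le_total a b with hab | hba
    · rw [min_eq_left hab]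
      nlinarith [mul_nonneg (by linarith : (0:ℝ) ≤ 1 - h) (by linarith : (0:ℝ) ≤ a + b - 2*s),
                 mul_nonneg h0.le (by linarith : (0:ℝ) ≤ b - a)]
    · rw [min_eq_right hba]
      have h1 : (0:ℝ) ≤ 1 + κ * h - 2 * κ := by
        nlinarith [mul_nonneg (neg_nonneg.2 hκ) (by linarith : (0:ℝ) ≤ 1 - h)]
      nlinarith [mul_nonneg (by linarith : (0:ℝ) ≤ 1 - h) (by linarith : (0:ℝ) ≤ a + b - 2*s),
                 mul_nonneg (mul_nonneg h0.le h1) (by linarith : (0:ℝ) ≤ a - b)]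
  · have hq : 0 < 2 - (1 + κ) * h := aux_q hκ h0 hT
    have hkh : (0:ℝ) ≤ 1 - κ * h := by nlinarith
    have hp : pcoef h κ = h * (2 - h) * (2 - κ * h) / (2 - (1 + κ) * h) := by
      rw [pcoef, if_neg (not_le.2 hgt)]
    rw [hp, div_mul_eq_mul_div, div_le_iff₀ hq]
    have hlow' : (0:ℝ) ≤ (1 - κ) * D - (2 * h * (1 - κ) * s + κ * h ^ 2 * (1 - κ) * a
        + (b - 2 * (1 - κ * h) * s + (1 - κ * h) ^ 2 * a)) := by linarith
    have hupp' : (0:ℝ) ≤ 2 * h * (1 - κ) * a - κ * h ^ 2 * (1 - κ) * a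
        - (b - 2 * (1 - κ * h) * s + (1 - κ * h) ^ 2 * a) - (1 - κ) * D := by linarith
    rcases le_total a b with hab | hba
    · rw [min_eq_left hab]
      have key : (1 - κ) * (h * (2 - h) * (2 - κ * h) * a) ≤ (1 - κ) * (D * (2 - (1 + κ) * h)) := by
        nlinarith [mul_nonneg hkh hlow', mul_nonneg (by linarith : (0:ℝ) ≤ h - 1) hupp',
                   mul_nonneg (mul_nonneg h0.le hκ1.le) (by linarith : (0:ℝ) ≤ b - a)]
      exact le_of_mul_le_mul_left key hκ1
    · rw [min_eq_right hba]
      have key : (1 - κ) * (h * (2 - h) * (2 - κ * h) * b) ≤ (1 - κ) * (D * (2 - (1 + κ) * h)) := by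
        nlinarith [mul_nonneg hkh hlow', mul_nonneg (by linarith : (0:ℝ) ≤ h - 1) hupp',
                   mul_nonneg (mul_nonneg (mul_nonneg h0.le hT) hκ1.le)
                     (by linarith : (0:ℝ) ≤ a - b)]
      exact le_of_mul_le_mul_left key hκ1


open scoped InnerProductSpace

section AuxVec

variable {d : ℕ}


private lemma convex_fderiv_le {φ : EuclideanSpace ℝ (Fin d) → ℝ}
    (hc : ConvexOn ℝ Set.univ φ) (hd : Differentiable ℝ φ)
    (u v : EuclideanSpace ℝ (Fin d)) :
    φ u + fderiv ℝ φ u (v - u) ≤ φ v := by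
  set ψ : ℝ → ℝ := fun t => φ (u + t • (v - u)) with hψ
  have hline : ∀ t : ℝ, HasDerivAt (fun t : ℝ => u + t • (v - u)) (v - u) t := by
    intro t
    simpa using ((hasDerivAt_id t).smul_const (v - u)).const_add u
  have hder : ∀ t : ℝ, HasDerivAt ψ (fderiv ℝ φ (u + t • (v - u)) (v - u)) t := by
    intro t
    exact (hd _).hasFDerivAt.comp_hasDerivAt t (hline t)
  have hconv : ConvexOn ℝ Set.univ ψ := by
    refine ⟨convex_univ, fun t1 _ t2 _ α β hα hβ hαβ => ?_⟩
    have h2 := hc.2 (Set.mem_univ (u + t1 • (v - u))) (Set.mem_univ (u + t2 • (v - u))) hα hβ hαβ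
    have e : α • (u + t1 • (v - u)) + β • (u + t2 • (v - u))
        = u + (α * t1 + β * t2) • (v - u) := by
      calc α • (u + t1 • (v - u)) + β • (u + t2 • (v - u))
          = (α + β) • u + (α * t1 + β * t2) • (v - u) := by module
        _ = u + (α * t1 + β * t2) • (v - u) := by rw [hαβ, one_smul]
    rw [e] at h2
    simpa [ψ, smul_eq_mul] using h2
  have h1 := hconv.le_slope_of_hasDerivAt (Set.mem_univ (0:ℝ)) (Set.mem_univ 1) one_pos
    (by simpa using hder 0)
  rw [slope_def_field] at h1
  simp only [ψ] at h1
  simp only [zero_smul, add_zero, one_smul] at h1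
  have e1 : u + (v - u) = v := by abel
  rw [e1] at h1
  norm_num at h1
  have hms : (fderiv ℝ φ u) (v - u) = (fderiv ℝ φ u) v - (fderiv ℝ φ u) u := map_sub _ _ _
  rw [hms]
  linarith

private lemma fderiv_eq_inner_gradient {f : EuclideanSpace ℝ (Fin d) → ℝ}
    (hf : Differentiable ℝ f) (x w : EuclideanSpace ℝ (Fin d)) :
    fderiv ℝ f x w = ⟪gradient f x, w⟫_ℝ := by
  have h := (hf x).hasGradientAt
  rw [(hasGradientAt_iff_hasFDerivAt.mp h).fderiv]
  exact InnerProductSpace.toDual_apply_apply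

private lemma diff_normsq : Differentiable ℝ (fun y : EuclideanSpace ℝ (Fin d) => ‖y‖ ^ 2) :=
  (contDiff_norm_sq ℝ (n := 1)).differentiable one_ne_zero

private lemma fderiv_combo (c : ℝ) {f : EuclideanSpace ℝ (Fin d) → ℝ}
    (hf : Differentiable ℝ f) (u w : EuclideanSpace ℝ (Fin d)) :
    fderiv ℝ (fun y => c / 2 * ‖y‖ ^ 2 - f y) u w
      = c * ⟪u, w⟫_ℝ - ⟪gradient f u, w⟫_ℝ := by
  have hsq : HasFDerivAt (fun y : EuclideanSpace ℝ (Fin d) => ⟪y, y⟫_ℝ)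
      ((fderivInnerCLM ℝ ((id u : EuclideanSpace ℝ (Fin d)), (id u : EuclideanSpace ℝ (Fin d)))).comp
        ((ContinuousLinearMap.id ℝ _).prod (ContinuousLinearMap.id ℝ _))) u :=
    (hasFDerivAt_id u).inner ℝ (hasFDerivAt_id u)
  have hfun : (fun y : EuclideanSpace ℝ (Fin d) => c / 2 * ‖y‖ ^ 2 - f y)
      = fun y => c / 2 * ⟪y, y⟫_ℝ - f y := by
    funext y; rw [real_inner_self_eq_norm_sq]
  rw [hfun]
  have hcomb : HasFDerivAt (fun y : EuclideanSpace ℝ (Fin d) => c / 2 * ⟪y, y⟫_ℝ - f y)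
      ((c / 2) • ((fderivInnerCLM ℝ ((id u : EuclideanSpace ℝ (Fin d)), (id u : EuclideanSpace ℝ (Fin d)))).comp
        ((ContinuousLinearMap.id ℝ _).prod (ContinuousLinearMap.id ℝ _))) - fderiv ℝ f u) u :=
    (hsq.const_mul (c / 2)).sub (hf u).hasFDerivAt
  rw [hcomb.fderiv]
  simp only [ContinuousLinearMap.coe_sub', Pi.sub_apply, ContinuousLinearMap.coe_smul',
    Pi.smul_apply, ContinuousLinearMap.coe_comp', Function.comp_apply,
    ContinuousLinearMap.prod_apply, ContinuousLinearMap.coe_id', id_eq, fderivInnerCLM_apply,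
    smul_eq_mul]
  rw [fderiv_eq_inner_gradient hf, real_inner_comm w u]
  ring

private lemma fderiv_combo2 (c : ℝ) {f : EuclideanSpace ℝ (Fin d) → ℝ}
    (hf : Differentiable ℝ f) (u w : EuclideanSpace ℝ (Fin d)) :
    fderiv ℝ (fun y => f y - c / 2 * ‖y‖ ^ 2) u w
      = ⟪gradient f u, w⟫_ℝ - c * ⟪u, w⟫_ℝ := by
  have hfun : (fun y : EuclideanSpace ℝ (Fin d) => f y - c / 2 * ‖y‖ ^ 2)
      = fun y => -(c / 2 * ‖y‖ ^ 2 - f y) := by funext y; ring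
  rw [hfun, fderiv_fun_neg]
  simp only [ContinuousLinearMap.neg_apply]
  rw [fderiv_combo c hf u w]
  ring

private lemma keyUpper {f : EuclideanSpace ℝ (Fin d) → ℝ} {L : ℝ}
    (hdiff : Differentiable ℝ f)
    (hupper : ConvexOn ℝ Set.univ (fun y => L / 2 * ‖y‖ ^ 2 - f y))
    (u v : EuclideanSpace ℝ (Fin d)) :
    f v ≤ f u + ⟪gradient f u, v - u⟫_ℝ + L / 2 * ‖v - u‖ ^ 2 := by
  have hφd : Differentiable ℝ (fun y : EuclideanSpace ℝ (Fin d) => L / 2 * ‖y‖ ^ 2 - f y) :=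
    (diff_normsq.const_mul (L / 2)).sub hdiff
  have h := convex_fderiv_le hupper hφd u v
  rw [fderiv_combo L hdiff u (v - u)] at h
  have e1 : ‖v - u‖ ^ 2 = ‖v‖ ^ 2 - 2 * ⟪v, u⟫_ℝ + ‖u‖ ^ 2 := norm_sub_sq_real v u
  have e2 : ⟪u, v - u⟫_ℝ = ⟪u, v⟫_ℝ - ‖u‖ ^ 2 := by
    rw [inner_sub_right, real_inner_self_eq_norm_sq]
  have e3 : ⟪v, u⟫_ℝ = ⟪u, v⟫_ℝ := real_inner_comm u v
  rw [e2] at h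
  rw [e1, e3]
  nlinarith [h]

private lemma keyLower {f : EuclideanSpace ℝ (Fin d) → ℝ} {μ : ℝ}
    (hdiff : Differentiable ℝ f)
    (hlower : ConvexOn ℝ Set.univ (fun y => f y - μ / 2 * ‖y‖ ^ 2))
    (u v : EuclideanSpace ℝ (Fin d)) :
    f u + ⟪gradient f u, v - u⟫_ℝ + μ / 2 * ‖v - u‖ ^ 2 ≤ f v := by
  have hφd : Differentiable ℝ (fun y : EuclideanSpace ℝ (Fin d) => f y - μ / 2 * ‖y‖ ^ 2) :=
    hdiff.sub (diff_normsq.const_mul (μ / 2))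
  have h := convex_fderiv_le hlower hφd u v
  rw [fderiv_combo2 μ hdiff u (v - u)] at h
  have e1 : ‖v - u‖ ^ 2 = ‖v‖ ^ 2 - 2 * ⟪v, u⟫_ℝ + ‖u‖ ^ 2 := norm_sub_sq_real v u
  have e2 : ⟪u, v - u⟫_ℝ = ⟪u, v⟫_ℝ - ‖u‖ ^ 2 := by
    rw [inner_sub_right, real_inner_self_eq_norm_sq]
  have e3 : ⟪v, u⟫_ℝ = ⟪u, v⟫_ℝ := real_inner_comm u v
  rw [e2] at h
  rw [e1, e3]
  nlinarith [h]

private lemma key_coco {f : EuclideanSpace ℝ (Fin d) → ℝ} {L μ : ℝ}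
    (hdiff : Differentiable ℝ f) (hL : 0 < L) (hμ : μ ≤ 0)
    (hupper : ConvexOn ℝ Set.univ (fun y => L / 2 * ‖y‖ ^ 2 - f y))
    (hlower : ConvexOn ℝ Set.univ (fun y => f y - μ / 2 * ‖y‖ ^ 2))
    (u v : EuclideanSpace ℝ (Fin d)) :
    ‖gradient f v - gradient f u - μ • (v - u)‖ ^ 2 / (2 * (L - μ))
      ≤ f v - f u - ⟪gradient f u, v - u⟫_ℝ - μ / 2 * ‖v - u‖ ^ 2 := by
  have hM0 : 0 < L - μ := by linarith
  set M : ℝ := L - μ with hM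
  obtain ⟨Δ', hΔ⟩ : ∃ q : EuclideanSpace ℝ (Fin d),
      gradient f v - gradient f u - μ • (v - u) = M • q :=
    ⟨M⁻¹ • (gradient f v - gradient f u - μ • (v - u)),
      (smul_inv_smul₀ hM0.ne' _).symm⟩
  set w : EuclideanSpace ℝ (Fin d) := v - Δ' with hw
  have h1 := keyLower hdiff hlower u w
  have h2 := keyUpper hdiff hupper v w
  have ewv : w - v = -Δ' := by rw [hw]; abel
  have ewu : w - u = (v - u) - Δ' := by rw [hw]; abel
  rw [ewu, inner_sub_right, norm_sub_sq_real] at h1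
  rw [ewv, inner_neg_right, norm_neg] at h2
  have hgvu : gradient f v - gradient f u = M • Δ' + μ • (v - u) := by
    rw [← hΔ]; abel
  have hCB : ⟪gradient f v, Δ'⟫_ℝ - ⟪gradient f u, Δ'⟫_ℝ
      = M * ‖Δ'‖ ^ 2 + μ * ⟪v - u, Δ'⟫_ℝ := by
    rw [← inner_sub_left, hgvu, inner_add_left, real_inner_smul_left, real_inner_smul_left,
      real_inner_self_eq_norm_sq]
  rw [hΔ]
  have egl : ‖M • Δ'‖ ^ 2 / (2 * M) = M / 2 * ‖Δ'‖ ^ 2 := by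
    rw [norm_smul, Real.norm_eq_abs, mul_pow, sq_abs]
    field_simp
  rw [egl]
  have hsplit : L / 2 * ‖Δ'‖ ^ 2 = M / 2 * ‖Δ'‖ ^ 2 + μ / 2 * ‖Δ'‖ ^ 2 := by
    rw [hM]; ring
  nlinarith [h1, h2, hCB, hsplit]


private lemma stepVec {f : EuclideanSpace ℝ (Fin d) → ℝ} {L μ κ h : ℝ}
    (hL : 0 < L) (hμ : μ ≤ 0) (hκ : κ = μ / L)
    (hdiff : Differentiable ℝ f)
    (hupper : ConvexOn ℝ Set.univ (fun y => L / 2 * ‖y‖ ^ 2 - f y))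
    (hlower : ConvexOn ℝ Set.univ (fun y => f y - μ / 2 * ‖y‖ ^ 2))
    (h0 : 0 < h) (hhb : h ≤ hbar κ) (u : EuclideanSpace ℝ (Fin d)) :
    pcoef h κ * min (‖gradient f u‖ ^ 2) (‖gradient f (u - (h / L) • gradient f u)‖ ^ 2)
      ≤ 2 * L * (f u - f (u - (h / L) • gradient f u)) := by
  have hκ0 : κ ≤ 0 := by rw [hκ]; exact div_nonpos_of_nonpos_of_nonneg hμ hL.le
  have hμL : μ = κ * L := by rw [hκ]; field_simp
  have hT := aux_T hκ0 h0 hhb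
  set v : EuclideanSpace ℝ (Fin d) := u - (h / L) • gradient f u with hv
  set a : ℝ := ‖gradient f u‖ ^ 2 with hA
  set b : ℝ := ‖gradient f v‖ ^ 2 with hB
  set s : ℝ := ⟪gradient f v, gradient f u⟫_ℝ with hS
  have hvu : v - u = -((h / L) • gradient f u) := by rw [hv]; abel
  have huv : u - v = (h / L) • gradient f u := by rw [hv]; abel
  have hμh : μ * (h / L) = κ * h := by rw [hμL]; field_simp
  have hnorm : ∀ r : ℝ, ‖gradient f v - r • gradient f u‖ ^ 2 = b - 2 * (r * s) + r ^ 2 * a := by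
    intro r
    rw [norm_sub_sq_real, real_inner_smul_right, norm_smul, Real.norm_eq_abs, mul_pow, sq_abs,
      hA, hB, hS]
  have hΔ1 : gradient f v - gradient f u - μ • (v - u)
      = gradient f v - (1 - κ * h) • gradient f u := by
    rw [hvu, smul_neg, smul_smul, hμh, sub_smul, one_smul]
    abel
  have hΔ2 : gradient f u - gradient f v - μ • (u - v)
      = -(gradient f v - (1 - κ * h) • gradient f u) := by
    rw [huv, smul_smul, hμh, sub_smul, one_smul]
    abel
  have hinner1 : ⟪gradient f u, v - u⟫_ℝ = -((h / L) * a) := by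
    rw [hvu, inner_neg_right, real_inner_smul_right, real_inner_self_eq_norm_sq, hA]
  have hinner2 : ⟪gradient f v, u - v⟫_ℝ = (h / L) * s := by
    rw [huv, real_inner_smul_right, hS]
  have hnvu : ‖v - u‖ ^ 2 = (h / L) ^ 2 * a := by
    rw [hvu, norm_neg, norm_smul, Real.norm_eq_abs, mul_pow, sq_abs, hA]
  have hnuv : ‖u - v‖ ^ 2 = (h / L) ^ 2 * a := by
    rw [huv, norm_smul, Real.norm_eq_abs, mul_pow, sq_abs, hA]
  have hLM : (0:ℝ) < 2 * (L - μ) := by linarith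
  have h1 := key_coco hdiff hL hμ hupper hlower u v
  rw [hΔ1, hnorm (1 - κ * h), hinner1, hnvu, div_le_iff₀ hLM] at h1
  have h2 := key_coco hdiff hL hμ hupper hlower v u
  rw [hΔ2, norm_neg, hnorm (1 - κ * h), hinner2, hnuv, div_le_iff₀ hLM] at h2
  have ha : 0 ≤ a := by rw [hA]; positivity
  have hb : 0 ≤ b := by rw [hB]; positivity
  have hcs : 2 * s ≤ a + b := by
    have e := norm_sub_sq_real (gradient f v) (gradient f u)
    have e2 : (0:ℝ) ≤ ‖gradient f v - gradient f u‖ ^ 2 := sq_nonneg _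
    rw [e] at e2
    rw [hA, hB, hS]
    linarith
  have hE2 : (f u - f v - (h / L) * s - μ / 2 * ((h / L) ^ 2 * a)) * (2 * (L - μ))
      = (1 - κ) * (2 * L * (f u - f v)) - 2 * h * (1 - κ) * s - κ * h ^ 2 * (1 - κ) * a := by
    rw [hμL]; field_simp
  have hE1 : (f v - f u - -((h / L) * a) - μ / 2 * ((h / L) ^ 2 * a)) * (2 * (L - μ))
      = -((1 - κ) * (2 * L * (f u - f v))) + 2 * h * (1 - κ) * a - κ * h ^ 2 * (1 - κ) * a := by
    rw [hμL]; field_simp; ring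
  refine step_scalar hκ0 h0 hT ha hb hcs ?_ ?_
  · linarith [h2, hE2]
  · linarith [h1, hE1]
end AuxVec

theorem stmt_11 {d : ℕ} (f : EuclideanSpace ℝ (Fin d) → ℝ) (L μ κ : ℝ)
    (hL : 0 < L) (hμ : μ ≤ 0) (hκ : κ = μ / L)
    (hdiff : Differentiable ℝ f)
    (hupper : ConvexOn ℝ Set.univ (fun y => L / 2 * ‖y‖ ^ 2 - f y))
    (hlower : ConvexOn ℝ Set.univ (fun y => f y - μ / 2 * ‖y‖ ^ 2))
    (fstar : ℝ) (hbdd : ∀ y, fstar ≤ f y)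
    (N : ℕ) (hN : 1 ≤ N)
    (h : ℕ → ℝ) (hh : ∀ i < N, h i ∈ Set.Ioc 0 (hbar κ))
    (x : ℕ → EuclideanSpace ℝ (Fin d))
    (hstep : ∀ i < N, x (i + 1) = x i - (h i / L) • gradient f (x i)) :
    (Finset.range (N + 1)).inf' (by simp) (fun i => ‖gradient f (x i)‖ ^ 2) ≤
      2 * L * (f (x 0) - fstar) / (1 + ∑ i ∈ Finset.range N, pcoef (h i) κ) := by
  have hκ0 : κ ≤ 0 := by rw [hκ]; exact div_nonpos_of_nonpos_of_nonneg hμ hL.le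
  set m := (Finset.range (N + 1)).inf' (by simp) (fun i => ‖gradient f (x i)‖ ^ 2) with hm
  have hmle : ∀ i, i ≤ N → m ≤ ‖gradient f (x i)‖ ^ 2 := fun i hi =>
    Finset.inf'_le _ (Finset.mem_range.mpr (by omega))
  have hstepm : ∀ i ∈ Finset.range N,
      pcoef (h i) κ * m ≤ 2 * L * f (x i) - 2 * L * f (x (i + 1)) := by
    intro i hi
    rw [Finset.mem_range] at hi
    obtain ⟨h0i, hbi⟩ := hh i hi
    have hTi := aux_T hκ0 h0i hbi
    have hstep' := stepVec hL hμ hκ hdiff hupper hlower h0i hbi (x i)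
    rw [← hstep i hi] at hstep'
    have hminm : m ≤ min (‖gradient f (x i)‖ ^ 2) (‖gradient f (x (i + 1))‖ ^ 2) :=
      le_min (hmle i (by omega)) (hmle (i + 1) (by omega))
    have := mul_le_mul_of_nonneg_left hminm (pcoef_nonneg hκ0 h0i hTi)
    have h3 := this.trans hstep'
    linarith
  have hsum := Finset.sum_le_sum hstepm
  have htel : ∑ i ∈ Finset.range N, (2 * L * f (x i) - 2 * L * f (x (i + 1)))
      = 2 * L * f (x 0) - 2 * L * f (x N) :=
    Finset.sum_range_sub' (fun i => 2 * L * f (x i)) N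
  rw [htel] at hsum
  rw [← Finset.sum_mul] at hsum
  have hlast : m ≤ 2 * L * f (x N) - 2 * L * fstar := by
    set v : EuclideanSpace ℝ (Fin d) := x N - (1 / L) • gradient f (x N) with hv
    have hk := keyUpper hdiff hupper (x N) v
    have hvu : v - x N = -((1 / L) • gradient f (x N)) := by rw [hv]; abel
    have hi1 : ⟪gradient f (x N), v - x N⟫_ℝ = -((1 / L) * ‖gradient f (x N)‖ ^ 2) := by
      rw [hvu, inner_neg_right, real_inner_smul_right, real_inner_self_eq_norm_sq]
    have hn1 : ‖v - x N‖ ^ 2 = (1 / L) ^ 2 * ‖gradient f (x N)‖ ^ 2 := by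
      rw [hvu, norm_neg, norm_smul, Real.norm_eq_abs, mul_pow, sq_abs]
    rw [hi1, hn1] at hk
    have he : -((1 / L) * ‖gradient f (x N)‖ ^ 2)
        + L / 2 * ((1 / L) ^ 2 * ‖gradient f (x N)‖ ^ 2)
        = -(‖gradient f (x N)‖ ^ 2 / (2 * L)) := by
      field_simp
      ring
    have hk2 : f v ≤ f (x N) - ‖gradient f (x N)‖ ^ 2 / (2 * L) := by linarith
    have hb2 : ‖gradient f (x N)‖ ^ 2 / (2 * L) ≤ f (x N) - fstar := by
      linarith [hbdd v]
    rw [div_le_iff₀ (by linarith : (0:ℝ) < 2 * L)] at hb2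
    have := hmle N le_rfl
    nlinarith
  have hS : 0 ≤ ∑ i ∈ Finset.range N, pcoef (h i) κ := by
    apply Finset.sum_nonneg
    intro i hi
    rw [Finset.mem_range] at hi
    obtain ⟨h0i, hbi⟩ := hh i hi
    exact pcoef_nonneg hκ0 h0i (aux_T hκ0 h0i hbi)
  rw [le_div_iff₀ (by linarith : (0:ℝ) < 1 + ∑ i ∈ Finset.range N, pcoef (h i) κ)]
  nlinarith [hsum, hlast]
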